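/- Let A > 0, R > 0 and B ∈ ℝ with 16B²R² ≤ π². For real τ > 0 and y > 0, the system 4A²R² e^{−y} cos τ = 16B²R² − τ² + y² and 4A²R² e^{−y} sin τ = −2τy holds if and only if there exists an integer n ≥ 1 such that τ ∈ (2πn − π, 2πn), y = −τ cot τ + √(τ² cot² τ + τ² − 16B²R²), and y e^{y} = −2A²R² (sin τ)/τ. (In particular, for τ in such an interval, the quadratic equation y² + 2τy cot τ − τ² + 16B²R² = 0 has exactly one positive root, given by the displayed formula.) -/
import Mathlib

lemma quad_abs_lt_sqrt (b c : ℝ) (hc : 0 < c) : |b| < Real.sqrt (b ^ 2 + c) := by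
  rw [← Real.sqrt_sq_eq_abs]
  exact Real.sqrt_lt_sqrt (sq_nonneg b) (by linarith)

lemma quad_iff (b c y : ℝ) (hc : 0 < c) (hy : 0 < y) :
    y ^ 2 + 2 * b * y - c = 0 ↔ y = -b + Real.sqrt (b ^ 2 + c) := by
  have h0 : (0:ℝ) ≤ b ^ 2 + c := by positivity
  have hs : Real.sqrt (b ^ 2 + c) ^ 2 = b ^ 2 + c := Real.sq_sqrt h0
  have hb := quad_abs_lt_sqrt b c hc
  have hb1 : b < Real.sqrt (b ^ 2 + c) := lt_of_le_of_lt (le_abs_self b) hb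
  have hb2 : -b < Real.sqrt (b ^ 2 + c) := lt_of_le_of_lt (neg_le_abs b) hb
  constructor
  · intro h
    have hfac : (y - (-b + Real.sqrt (b ^ 2 + c))) * (y - (-b - Real.sqrt (b ^ 2 + c))) = 0 := by
      nlinarith [hs]
    rcases mul_eq_zero.mp hfac with h1 | h1
    · linarith
    · exfalso; nlinarith
  · intro h; subst h; nlinarith

lemma sin_neg_on (n : ℕ) (hn : 1 ≤ n) (τ : ℝ)
    (h : τ ∈ Set.Ioo (2 * Real.pi * (n : ℝ) - Real.pi) (2 * Real.pi * (n : ℝ))) :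
    Real.sin τ < 0 ∧ Real.pi < τ := by
  obtain ⟨h1, h2⟩ := h
  have hpi := Real.pi_pos
  have hn1 : (1:ℝ) ≤ (n:ℝ) := by exact_mod_cast hn
  have htpi : Real.pi < τ := by nlinarith
  refine ⟨?_, htpi⟩
  have heq : Real.sin τ = Real.sin (τ - 2 * Real.pi * n) := by
    have h := Real.sin_add_int_mul_two_pi (τ - 2 * Real.pi * n) n
    rw [← h]; push_cast; ring_nf
  rw [heq]
  exact Real.sin_neg_of_neg_of_neg_pi_lt (by linarith) (by linarith)

lemma exists_n (τ : ℝ) (ht : 0 < τ) (hs : Real.sin τ < 0) :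
    ∃ n : ℕ, 1 ≤ n ∧ τ ∈ Set.Ioo (2 * Real.pi * (n : ℝ) - Real.pi) (2 * Real.pi * (n : ℝ)) := by
  have hpi := Real.pi_pos
  set m : ℤ := ⌊τ / (2 * Real.pi)⌋ with hm
  have hm0 : 0 ≤ m := Int.floor_nonneg.mpr (by positivity)
  have h1 : (m : ℝ) ≤ τ / (2 * Real.pi) := Int.floor_le _
  have h2 : τ / (2 * Real.pi) < m + 1 := Int.lt_floor_add_one _
  have h1' : 2 * Real.pi * (m : ℝ) ≤ τ := by
    rw [le_div_iff₀ (by positivity)] at h1; linarith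
  have h2' : τ < 2 * Real.pi * ((m : ℝ) + 1) := by
    rw [div_lt_iff₀ (by positivity)] at h2; linarith
  have hsin : Real.sin (τ - 2 * Real.pi * m) = Real.sin τ := by
    have h := Real.sin_add_int_mul_two_pi (τ - 2 * Real.pi * m) m
    rw [← h]; ring_nf
  have hgt : 2 * Real.pi * (m : ℝ) + Real.pi < τ := by
    by_contra hle
    push_neg at hle
    have : 0 ≤ Real.sin (τ - 2 * Real.pi * m) :=
      Real.sin_nonneg_of_nonneg_of_le_pi (by linarith) (by linarith)
    rw [hsin] at this; linarith
  have hnn : (0:ℤ) ≤ m + 1 := by omega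
  have hcast : (((m + 1).toNat : ℕ) : ℝ) = (m : ℝ) + 1 := by
    have h := Int.toNat_of_nonneg hnn
    exact_mod_cast congrArg (fun z : ℤ => (z : ℝ)) h
  refine ⟨(m + 1).toNat, ?_, ?_, ?_⟩
  · omega
  · rw [hcast]; linarith
  · rw [hcast]; linarith

/-- For `τ, y > 0` with `16B²R² ≤ π²`, the transcendental system
`4A²R²e^{−y}cos τ = 16B²R² − τ² + y²`, `4A²R²e^{−y}sin τ = −2τy` holds if and only if there is
an integer `n ≥ 1` with `τ ∈ (2πn − π, 2πn)`,
`y = −τ cot τ + √(τ²cot²τ + τ² − 16B²R²)` and `y e^y = −2A²R² sin τ / τ`.  In particular, for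
`τ` in such an interval the quadratic `y² + 2τy cot τ − τ² + 16B²R² = 0` has exactly one
positive root, given by the displayed formula. -/
theorem a1_zero_system_reduction (A B R : ℝ) (hA : 0 < A) (hR : 0 < R)
    (hBR : 16 * B ^ 2 * R ^ 2 ≤ Real.pi ^ 2) :
    (∀ τ y : ℝ, 0 < τ → 0 < y →
      ((4 * A ^ 2 * R ^ 2 * Real.exp (-y) * Real.cos τ = 16 * B ^ 2 * R ^ 2 - τ ^ 2 + y ^ 2 ∧
        4 * A ^ 2 * R ^ 2 * Real.exp (-y) * Real.sin τ = -2 * τ * y)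
        ↔ ∃ n : ℕ, 1 ≤ n ∧ τ ∈ Set.Ioo (2 * Real.pi * (n : ℝ) - Real.pi) (2 * Real.pi * (n : ℝ)) ∧
            y = -τ * Real.cot τ +
              Real.sqrt (τ ^ 2 * (Real.cot τ) ^ 2 + τ ^ 2 - 16 * B ^ 2 * R ^ 2) ∧
            y * Real.exp y = -2 * A ^ 2 * R ^ 2 * Real.sin τ / τ)) ∧
    (∀ n : ℕ, 1 ≤ n →
      ∀ τ ∈ Set.Ioo (2 * Real.pi * (n : ℝ) - Real.pi) (2 * Real.pi * (n : ℝ)),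
        (∃! y : ℝ, 0 < y ∧ y ^ 2 + 2 * τ * y * Real.cot τ - τ ^ 2 + 16 * B ^ 2 * R ^ 2 = 0) ∧
        (∀ y : ℝ, 0 < y → y ^ 2 + 2 * τ * y * Real.cot τ - τ ^ 2 + 16 * B ^ 2 * R ^ 2 = 0 →
          y = -τ * Real.cot τ +
            Real.sqrt (τ ^ 2 * (Real.cot τ) ^ 2 + τ ^ 2 - 16 * B ^ 2 * R ^ 2))) := by
  have hpi := Real.pi_pos
  constructor
  · intro τ y ht hy
    have hτ' : τ ≠ 0 := ne_of_gt ht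
    have hey : Real.exp y ≠ 0 := (Real.exp_pos y).ne'
    have harg : (τ * Real.cot τ) ^ 2 + (τ ^ 2 - 16 * B ^ 2 * R ^ 2)
        = τ ^ 2 * (Real.cot τ) ^ 2 + τ ^ 2 - 16 * B ^ 2 * R ^ 2 := by ring
    constructor
    · rintro ⟨e1, e2⟩
      have hE : 0 < 4 * A ^ 2 * R ^ 2 * Real.exp (-y) := by positivity
      have hs : Real.sin τ < 0 := by
        by_contra h
        push_neg at h
        nlinarith [mul_nonneg hE.le h]
      obtain ⟨n, hn, hmem⟩ := exists_n τ ht hs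
      have hπτ : Real.pi < τ := (sin_neg_on n hn τ hmem).2
      have hc : 0 < τ ^ 2 - 16 * B ^ 2 * R ^ 2 := by nlinarith
      have hsne : Real.sin τ ≠ 0 := ne_of_lt hs
      have hcot : Real.cot τ = Real.cos τ / Real.sin τ := Real.cot_eq_cos_div_sin τ
      have key : -2 * τ * y * Real.cos τ = (16 * B ^ 2 * R ^ 2 - τ ^ 2 + y ^ 2) * Real.sin τ := by
        rw [← e1, ← e2]; ring
      have hquad : y ^ 2 + 2 * (τ * Real.cot τ) * y - (τ ^ 2 - 16 * B ^ 2 * R ^ 2) = 0 := by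
        rw [hcot]
        field_simp
        linear_combination -key
      have hyeq := (quad_iff (τ * Real.cot τ) (τ ^ 2 - 16 * B ^ 2 * R ^ 2) y hc hy).mp hquad
      refine ⟨n, hn, hmem, ?_, ?_⟩
      · rw [hyeq, harg]; ring
      · rw [eq_div_iff hτ']
        rw [Real.exp_neg] at e2
        field_simp at e2
        linear_combination ((1:ℝ)/2) * e2
    · rintro ⟨n, hn, hmem, hyeq, hye⟩
      obtain ⟨hs, hπτ⟩ := sin_neg_on n hn τ hmem
      have hsne : Real.sin τ ≠ 0 := ne_of_lt hs
      have hc : 0 < τ ^ 2 - 16 * B ^ 2 * R ^ 2 := by nlinarith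
      have hquad : y ^ 2 + 2 * (τ * Real.cot τ) * y - (τ ^ 2 - 16 * B ^ 2 * R ^ 2) = 0 := by
        apply (quad_iff (τ * Real.cot τ) (τ ^ 2 - 16 * B ^ 2 * R ^ 2) y hc hy).mpr
        rw [harg, hyeq]; ring
      have e2 : 4 * A ^ 2 * R ^ 2 * Real.exp (-y) * Real.sin τ = -2 * τ * y := by
        rw [eq_div_iff hτ'] at hye
        rw [Real.exp_neg]
        field_simp
        linear_combination (2:ℝ) * hye
      refine ⟨?_, e2⟩
      have hcot : Real.cot τ = Real.cos τ / Real.sin τ := Real.cot_eq_cos_div_sin τ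
      rw [hcot] at hquad
      have hq' : y ^ 2 * Real.sin τ + 2 * τ * Real.cos τ * y
          - (τ ^ 2 - 16 * B ^ 2 * R ^ 2) * Real.sin τ = 0 := by
        field_simp at hquad
        linear_combination hquad
      apply mul_left_cancel₀ hsne
      linear_combination Real.cos τ * e2 - hq'
  · intro n hn τ hmem
    obtain ⟨hs, hπτ⟩ := sin_neg_on n hn τ hmem
    have hc : 0 < τ ^ 2 - 16 * B ^ 2 * R ^ 2 := by nlinarith
    set b := τ * Real.cot τ with hb
    set c := τ ^ 2 - 16 * B ^ 2 * R ^ 2 with hcdef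
    have harg : b ^ 2 + c = τ ^ 2 * (Real.cot τ) ^ 2 + τ ^ 2 - 16 * B ^ 2 * R ^ 2 := by
      rw [hb, hcdef]; ring
    have habs := quad_abs_lt_sqrt b c hc
    have hroot : 0 < -b + Real.sqrt (b ^ 2 + c) := by
      have := lt_of_le_of_lt (le_abs_self b) habs; linarith
    have hform : ∀ y : ℝ, (y ^ 2 + 2 * τ * y * Real.cot τ - τ ^ 2 + 16 * B ^ 2 * R ^ 2 = 0)
        ↔ (y ^ 2 + 2 * b * y - c = 0) := by
      intro y
      constructor <;> intro h <;> [linear_combination h; linear_combination h]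
    constructor
    · refine ⟨-b + Real.sqrt (b ^ 2 + c), ⟨hroot, ?_⟩, ?_⟩
      · rw [hform]
        exact (quad_iff b c _ hc hroot).mpr rfl
      · rintro z ⟨hz, hzq⟩
        rw [hform] at hzq
        exact (quad_iff b c z hc hz).mp hzq
    · intro y hy hyq
      rw [hform] at hyq
      have := (quad_iff b c y hc hy).mp hyq
      rw [this, harg]; ring
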